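/- If k : Ω × B(Ω) → ℝ is a transition kernel on a Polish space Ω (i.e., k(x,·) is a finite signed Borel measure for each x and x ↦ k(x,A) is Borel measurable for each Borel set A), then the map |k| : Ω × B(Ω) → [0,∞) defined by |k|(x,A) = total variation of k(x,·) evaluated at A, is again a transition kernel; in particular x ↦ |k|(x,A) is Borel measurable for every Borel set A. -/

import Mathlib

open MeasureTheory Topology Filter
open scoped NNReal ENNReal BoundedContinuousFunction symmDiff

noncomputable def sInt {Ω : Type*} [MeasurableSpace Ω] (μ : SignedMeasure Ω) (f : Ω → ℝ) : ℝ :=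
  (∫ x, f x ∂μ.toJordanDecomposition.posPart) - ∫ x, f x ∂μ.toJordanDecomposition.negPart

def IsTransKernel {Ω : Type*} [MeasurableSpace Ω] (k : Ω → SignedMeasure Ω) : Prop :=
  ∀ A : Set Ω, MeasurableSet A → Measurable fun x => k x A

def IsBddKernel {Ω : Type*} [MeasurableSpace Ω] (k : Ω → SignedMeasure Ω) : Prop :=
  IsTransKernel k ∧ ∃ C : ℝ≥0, ∀ x, (k x).totalVariation Set.univ ≤ C

def GivenByKernel {Ω : Type*} [MeasurableSpace Ω]
    (T : SignedMeasure Ω →ₗ[ℝ] SignedMeasure Ω) (k : Ω → SignedMeasure Ω) : Prop :=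
  ∀ (μ : SignedMeasure Ω) (A : Set Ω), MeasurableSet A → T μ A = sInt μ (fun x => k x A)

def IsBdMeasurable {Ω : Type*} [MeasurableSpace Ω] (f : Ω → ℝ) : Prop :=
  Measurable f ∧ ∃ C : ℝ, ∀ x, |f x| ≤ C

instance totalVariation_isFiniteMeasure {Ω : Type*} [MeasurableSpace Ω] (μ : SignedMeasure Ω) :
    IsFiniteMeasure μ.totalVariation := by
  unfold SignedMeasure.totalVariation; infer_instance

lemma tr_le_add {a b c : ℝ≥0∞} (h : a ≤ b + c) (hb : b ≠ ⊤) (hc : c ≠ ⊤) :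
    a.toReal ≤ b.toReal + c.toReal := by
  rw [← ENNReal.toReal_add hb hc]
  exact ENNReal.toReal_mono (by simp [hb, hc, ENNReal.add_ne_top]) h

/-- The key formula: for a signed measure `μ` and a generating set algebra `𝒜`, the total
variation of a measurable set `A` is the supremum over `C ∈ 𝒜` of
`μ (C ∩ A) - μ (A \ C)`. -/
lemma totalVariation_eq_iSup {Ω : Type*} [m : MeasurableSpace Ω] (𝒜 : Set (Set Ω))
    (h𝒜 : MeasureTheory.IsSetAlgebra 𝒜) (hgen : m = MeasurableSpace.generateFrom 𝒜)
    (μ : SignedMeasure Ω) {A : Set Ω} (hA : MeasurableSet A) :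
    μ.totalVariation A
      = ⨆ C : 𝒜, ENNReal.ofReal (μ ((C : Set Ω) ∩ A) - μ (A \ (C : Set Ω))) := by
  set p := μ.toJordanDecomposition.posPart with hp
  set n := μ.toJordanDecomposition.negPart with hn
  have hmeas𝒜 : ∀ C ∈ 𝒜, MeasurableSet C := fun C hC =>
    hgen ▸ MeasurableSpace.measurableSet_generateFrom hC
  have hμapp : ∀ B : Set Ω, MeasurableSet B → μ B = (p B).toReal - (n B).toReal := by
    intro B hB
    conv_lhs => rw [← μ.toSignedMeasure_toJordanDecomposition]
    rw [MeasureTheory.JordanDecomposition.toSignedMeasure, Measure.toSignedMeasure_sub_apply hB]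
    rfl
  have htv : μ.totalVariation A = p A + n A := by
    simp [SignedMeasure.totalVariation, hp, hn]
  rw [htv]
  have hPA : p A ≠ ⊤ := measure_ne_top _ _
  have hNA : n A ≠ ⊤ := measure_ne_top _ _
  apply le_antisymm
  · -- `≤` : approximate by elements of the algebra
    refine ENNReal.le_of_forall_pos_le_add fun ε hε hlt => ?_
    obtain ⟨s, hs, hps, hns⟩ := μ.toJordanDecomposition.mutuallySingular
    set B : Set Ω := A \ s with hB
    have hBm : MeasurableSet B := hA.diff hs
    have hBA : B ⊆ A := Set.diff_subset
    have hpB : p B = p A := measure_diff_null hps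
    have hnB : n B = 0 := measure_mono_null (fun x hx => hx.2) hns
    set ν : Measure Ω := p + n with hν
    have hνfin : IsFiniteMeasure ν := by rw [hν]; infer_instance
    have hdense : ν.MeasureDense 𝒜 :=
      Measure.MeasureDense.of_generateFrom_isSetAlgebra_finite ν h𝒜 hgen
    set δ : ℝ := (ε : ℝ) / 4 with hδ
    have hδpos : 0 < δ := by positivity
    obtain ⟨C, hC𝒜, hCapprox⟩ := hdense.approx B hBm (measure_ne_top _ _) δ hδpos
    have hCm : MeasurableSet C := hmeas𝒜 C hC𝒜
    -- the symmetric difference bound, in real numbers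
    have hΔfin : ν (B ∆ C) ≠ ⊤ := measure_ne_top _ _
    set e : ℝ := (ν (B ∆ C)).toReal with he
    have heδ : e < δ := by
      rw [he]
      exact (ENNReal.lt_ofReal_iff_toReal_lt hΔfin).mp hCapprox
    have hpν : ∀ X : Set Ω, p X ≤ ν X := fun X => by
      rw [hν]; simp only [Measure.add_apply]; exact le_self_add
    have hnν : ∀ X : Set Ω, n X ≤ ν X := fun X => by
      rw [hν]; simp only [Measure.add_apply]; exact le_add_self
    have hBdC : B \ C ⊆ B ∆ C := fun x hx => Or.inl hx
    have hCdB : C \ B ⊆ B ∆ C := fun x hx => Or.inr hx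
    -- four real inequalities
    have f1 : (p A).toReal ≤ (p (C ∩ A)).toReal + e := by
      have h1 : p A ≤ p (C ∩ A) + ν (B ∆ C) := by
        calc p A = p B := hpB.symm
        _ ≤ p (B ∩ (C ∩ A)) + p (B \ (C ∩ A)) := measure_le_inter_add_diff _ _ _
        _ ≤ p (C ∩ A) + ν (B ∆ C) := by
            refine add_le_add (measure_mono Set.inter_subset_right) ?_
            refine le_trans (measure_mono ?_) (le_trans (measure_mono hBdC) (hpν _))
            intro x hx
            exact ⟨hx.1, fun hxC => hx.2 ⟨hxC, hBA hx.1⟩⟩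
      exact tr_le_add h1 (measure_ne_top _ _) hΔfin
    have f2 : (n (C ∩ A)).toReal ≤ e := by
      have h2 : n (C ∩ A) ≤ ν (B ∆ C) := by
        calc n (C ∩ A) ≤ n ((C ∩ A) ∩ B) + n ((C ∩ A) \ B) := measure_le_inter_add_diff _ _ _
        _ ≤ n B + n (C \ B) := add_le_add (measure_mono Set.inter_subset_right)
            (measure_mono (fun x hx => ⟨hx.1.1, hx.2⟩))
        _ = n (C \ B) := by rw [hnB, zero_add]
        _ ≤ ν (B ∆ C) := le_trans (measure_mono hCdB) (hnν _)
      exact le_trans (ENNReal.toReal_mono hΔfin h2) le_rfl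
    have f3 : (p (A \ C)).toReal ≤ e := by
      have h3 : p (A \ C) ≤ ν (B ∆ C) := by
        calc p (A \ C) ≤ p ((A \ C) ∩ B) + p ((A \ C) \ B) := measure_le_inter_add_diff _ _ _
        _ ≤ p (B \ C) + p (A \ B) := add_le_add
            (measure_mono (fun x hx => ⟨hx.2, hx.1.2⟩))
            (measure_mono (fun x hx => ⟨hx.1.1, hx.2⟩))
        _ ≤ p (B \ C) + p s := by
            refine add_le_add le_rfl (measure_mono ?_)
            intro x hx
            by_contra hxs
            exact hx.2 ⟨hx.1, hxs⟩
        _ = p (B \ C) := by rw [hps, add_zero]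
        _ ≤ ν (B ∆ C) := le_trans (measure_mono hBdC) (hpν _)
      exact ENNReal.toReal_mono hΔfin h3
    have f4 : (n A).toReal ≤ (n (A \ C)).toReal + e := by
      have h4 : n A ≤ n (A \ C) + ν (B ∆ C) := by
        calc n A ≤ n (A ∩ B) + n (A \ B) := measure_le_inter_add_diff _ _ _
        _ = n (A \ B) := by
            rw [show n (A ∩ B) = 0 from measure_mono_null Set.inter_subset_right hnB, zero_add]
        _ ≤ n ((A \ B) ∩ (A \ C)) + n ((A \ B) \ (A \ C)) := measure_le_inter_add_diff _ _ _
        _ ≤ n (A \ C) + ν (B ∆ C) := by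
            refine add_le_add (measure_mono Set.inter_subset_right) ?_
            refine le_trans (measure_mono ?_) (le_trans (measure_mono hCdB) (hnν _))
            intro x hx
            rcases Classical.em (x ∈ C) with hxC | hxC
            · exact ⟨hxC, hx.1.2⟩
            · exact absurd ⟨hx.1.1, hxC⟩ hx.2
      exact tr_le_add h4 (measure_ne_top _ _) hΔfin
    -- combine
    have hterm : (p A + n A).toReal ≤ (μ (C ∩ A) - μ (A \ C)) + (ε : ℝ) := by
      rw [ENNReal.toReal_add hPA hNA, hμapp _ (hCm.inter hA), hμapp _ (hA.diff hCm)]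
      have hε4 : (ε : ℝ) = 4 * δ := by rw [hδ]; ring
      have h2' := f2
      have h3' := f3
      nlinarith [f1, f4, heδ, ENNReal.toReal_nonneg (a := n (C ∩ A)),
        ENNReal.toReal_nonneg (a := p (A \ C))]
    calc p A + n A = ENNReal.ofReal ((p A + n A).toReal) := by
          rw [ENNReal.ofReal_toReal (ENNReal.add_ne_top.mpr ⟨hPA, hNA⟩)]
    _ ≤ ENNReal.ofReal ((μ (C ∩ A) - μ (A \ C)) + (ε : ℝ)) := ENNReal.ofReal_le_ofReal hterm
    _ ≤ ENNReal.ofReal (μ (C ∩ A) - μ (A \ C)) + ENNReal.ofReal (ε : ℝ) :=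
          ENNReal.ofReal_add_le
    _ ≤ (⨆ C : 𝒜, ENNReal.ofReal (μ ((C : Set Ω) ∩ A) - μ (A \ (C : Set Ω)))) + ε := by
          rw [ENNReal.ofReal_coe_nnreal]
          exact add_le_add (le_iSup (fun C : 𝒜 =>
            ENNReal.ofReal (μ ((C : Set Ω) ∩ A) - μ (A \ (C : Set Ω)))) ⟨C, hC𝒜⟩) le_rfl
  · -- `≥` : each term is bounded by the total variation
    refine iSup_le fun ⟨C, hC𝒜⟩ => ?_
    have hCm : MeasurableSet C := hmeas𝒜 C hC𝒜
    have hb : μ (C ∩ A) - μ (A \ C) ≤ (p A + n A).toReal := by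
      rw [hμapp _ (hCm.inter hA), hμapp _ (hA.diff hCm), ENNReal.toReal_add hPA hNA]
      have h1 : (p (C ∩ A)).toReal ≤ (p A).toReal :=
        ENNReal.toReal_mono hPA (measure_mono Set.inter_subset_right)
      have h2 : (n (A \ C)).toReal ≤ (n A).toReal :=
        ENNReal.toReal_mono hNA (measure_mono Set.diff_subset)
      have h3 : (0:ℝ) ≤ (n (C ∩ A)).toReal := ENNReal.toReal_nonneg
      have h4 : (0:ℝ) ≤ (p (A \ C)).toReal := ENNReal.toReal_nonneg
      linarith
    exact ENNReal.ofReal_le_of_le_toReal hb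

theorem stmt0 {Ω : Type*} [TopologicalSpace Ω] [PolishSpace Ω] [MeasurableSpace Ω] [BorelSpace Ω]
    (k : Ω → SignedMeasure Ω) (hk : IsTransKernel k) :
    (∀ x, IsFiniteMeasure ((k x).totalVariation)) ∧
    (∀ A : Set Ω, MeasurableSet A → Measurable fun x => (k x).totalVariation A) := by
  refine ⟨fun x => inferInstance, fun A hA => ?_⟩
  obtain ⟨b, hbc, hbgen⟩ :=
    MeasurableSpace.CountablyGenerated.isCountablyGenerated (α := Ω)
  set 𝒜 : Set (Set Ω) := MeasureTheory.generateSetAlgebra b with h𝒜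
  have h𝒜alg : MeasureTheory.IsSetAlgebra 𝒜 := MeasureTheory.isSetAlgebra_generateSetAlgebra
  have hgen : ‹MeasurableSpace Ω› = MeasurableSpace.generateFrom 𝒜 := by
    rw [hbgen, h𝒜, MeasureTheory.generateFrom_generateSetAlgebra_eq]
  have hcount : 𝒜.Countable := MeasureTheory.countable_generateSetAlgebra hbc
  haveI := hcount.to_subtype
  have hmeas𝒜 : ∀ C ∈ 𝒜, MeasurableSet C := fun C hC =>
    hgen ▸ MeasurableSpace.measurableSet_generateFrom hC
  have heq : ∀ x, (k x).totalVariation A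
      = ⨆ C : 𝒜, ENNReal.ofReal (k x ((C : Set Ω) ∩ A) - k x (A \ (C : Set Ω))) :=
    fun x => totalVariation_eq_iSup 𝒜 h𝒜alg hgen (k x) hA
  simp_rw [heq]
  refine Measurable.iSup fun C => ENNReal.measurable_ofReal.comp ?_
  exact (hk _ ((hmeas𝒜 C C.2).inter hA)).sub (hk _ (hA.diff (hmeas𝒜 C C.2)))
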